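/- Let H be a complex Hilbert space, X a closed subspace with orthogonal complement Xᗮ, F a finite-dimensional subspace of X, W a closed subspace of Xᗮ such that the quotient Xᗮ/W is finite-dimensional, and φ : W → X a continuous linear map. Set G := {w + φ(w) : w ∈ W} and B := F + G. Then B is a closed subspace of H, X ∩ B = F, X + B = X + W, the pair (X, B) is a Fredholm pair in H, and ind(X, B) = dim F − dim(Xᗮ/W). In particular, the index is independent of φ, so all the subspaces B_s := F + {w + sφ(w) : w ∈ W}, 0 ≤ s ≤ 1, form Fredholm pairs with X of the same index. -/

import Mathlib

open Module

/-- A pair `(X, Y)` of closed subspaces of a complex Hilbert (or normed) space `H`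
is a *Fredholm pair* if `X ∩ Y` is finite-dimensional, `X + Y` is closed, and
`H / (X + Y)` is finite-dimensional. -/
def IsFredholmPair {H : Type*} [NormedAddCommGroup H] [NormedSpace ℂ H]
    (X Y : Submodule ℂ H) : Prop :=
  FiniteDimensional ℂ ↥(X ⊓ Y) ∧ IsClosed ((X ⊔ Y : Submodule ℂ H) : Set H) ∧
    FiniteDimensional ℂ (H ⧸ (X ⊔ Y))

/-- The index of a Fredholm pair: `dim (X ∩ Y) - dim (H / (X + Y))`. -/
noncomputable def fpIndex {H : Type*} [NormedAddCommGroup H] [NormedSpace ℂ H]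
    (X Y : Submodule ℂ H) : ℤ :=
  (finrank ℂ ↥(X ⊓ Y) : ℤ) - (finrank ℂ (H ⧸ (X ⊔ Y)) : ℤ)


set_option maxHeartbeats 1000000

private lemma ortho_norm_le {H : Type*} [NormedAddCommGroup H] [InnerProductSpace ℂ H]
    {x y : H} (h : inner (𝕜 := ℂ) x y = 0) : ‖x‖ ≤ ‖x + y‖ ∧ ‖y‖ ≤ ‖x + y‖ := by
  have h2 := norm_add_sq_eq_norm_sq_add_norm_sq_of_inner_eq_zero x y h
  constructor <;>
    nlinarith [norm_nonneg x, norm_nonneg y, norm_nonneg (x + y), sq_nonneg ‖x‖, sq_nonneg ‖y‖]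

private lemma fredholm_key {H : Type*} [NormedAddCommGroup H] [InnerProductSpace ℂ H]
    [CompleteSpace H]
    (X : Submodule ℂ H) (hXc : IsClosed (X : Set H))
    (F : Submodule ℂ H) (hFX : F ≤ X) (hFfin : FiniteDimensional ℂ F)
    (W : Submodule ℂ H) (hWX : W ≤ Xᗮ) (hWc : IsClosed (W : Set H))
    (hcofin : FiniteDimensional ℂ (↥Xᗮ ⧸ W.comap Xᗮ.subtype))
    (ψ : ↥W →L[ℂ] ↥X) :
    IsClosed ((F ⊔ LinearMap.range (W.subtype + X.subtype ∘ₗ (ψ : ↥W →ₗ[ℂ] ↥X)) :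
        Submodule ℂ H) : Set H) ∧
    X ⊓ (F ⊔ LinearMap.range (W.subtype + X.subtype ∘ₗ (ψ : ↥W →ₗ[ℂ] ↥X))) = F ∧
    X ⊔ (F ⊔ LinearMap.range (W.subtype + X.subtype ∘ₗ (ψ : ↥W →ₗ[ℂ] ↥X))) = X ⊔ W ∧
    IsFredholmPair X (F ⊔ LinearMap.range (W.subtype + X.subtype ∘ₗ (ψ : ↥W →ₗ[ℂ] ↥X))) ∧
    fpIndex X (F ⊔ LinearMap.range (W.subtype + X.subtype ∘ₗ (ψ : ↥W →ₗ[ℂ] ↥X)))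
      = (finrank ℂ F : ℤ) - (finrank ℂ (↥Xᗮ ⧸ W.comap Xᗮ.subtype) : ℤ) := by
  haveI : CompleteSpace X := hXc.completeSpace_coe
  haveI : CompleteSpace W := hWc.completeSpace_coe
  haveI := hFfin
  haveI := hcofin
  set L : ↥W →ₗ[ℂ] H := W.subtype + X.subtype ∘ₗ (ψ : ↥W →ₗ[ℂ] ↥X) with hLdef
  have hL : ∀ w : ↥W, L w = (w : H) + (ψ w : H) := fun w => rfl
  have hXW_bot : X ⊓ Xᗮ = ⊥ := X.orthogonal_disjoint.eq_bot
  -- G ⊓ X = ⊥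
  have hGX : LinearMap.range L ⊓ X = ⊥ := by
    rw [eq_bot_iff]
    rintro x hx
    obtain ⟨⟨w, rfl⟩, hxX⟩ := Submodule.mem_inf.mp hx
    have hwX : (w : H) ∈ X := by
      have hrw : (w : H) = L w - (ψ w : H) := by rw [hL]; abel
      rw [hrw]; exact X.sub_mem hxX (ψ w).2
    have hw0 : (w : H) ∈ X ⊓ Xᗮ := ⟨hwX, hWX w.2⟩
    rw [hXW_bot] at hw0
    have : w = 0 := Subtype.ext hw0
    simp [this, hL]
  have hinf : X ⊓ (F ⊔ LinearMap.range L) = F := by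
    rw [inf_comm, sup_inf_assoc_of_le _ hFX, hGX, sup_bot_eq]
  have hsupGW : X ⊔ LinearMap.range L = X ⊔ W := by
    apply le_antisymm
    · apply sup_le le_sup_left
      rintro x ⟨w, rfl⟩
      rw [hL]
      exact Submodule.add_mem _ (Submodule.mem_sup_right w.2) (Submodule.mem_sup_left (ψ w).2)
    · apply sup_le le_sup_left
      intro x hx
      have hrw : x = L ⟨x, hx⟩ - (ψ ⟨x, hx⟩ : H) := by rw [hL]; abel
      rw [hrw]
      exact Submodule.sub_mem _ (Submodule.mem_sup_right ⟨⟨x, hx⟩, rfl⟩)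
        (Submodule.mem_sup_left (ψ ⟨x, hx⟩).2)
  have hsup : X ⊔ (F ⊔ LinearMap.range L) = X ⊔ W := by
    rw [← sup_assoc, sup_of_le_left hFX, hsupGW]
  -- closedness of X ⊔ W
  have hXWclosed : IsClosed ((X ⊔ W : Submodule ℂ H) : Set H) := by
    let T : (↥X × ↥W) →L[ℂ] H := X.subtypeL.coprod W.subtypeL
    have hT : ∀ p : ↥X × ↥W, T p = (p.1 : H) + (p.2 : H) := fun p => rfl
    have hTanti : AntilipschitzWith 1 T := by
      apply AddMonoidHomClass.antilipschitz_of_bound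
      rintro ⟨x, w⟩
      have h0 : inner (𝕜 := ℂ) (x : H) (w : H) = 0 :=
        Submodule.inner_right_of_mem_orthogonal x.2 (hWX w.2)
      obtain ⟨h1, h2⟩ := ortho_norm_le h0
      rw [hT]
      simp only [NNReal.coe_one, one_mul, Prod.norm_def]
      exact max_le h1 h2
    have hTrange : Set.range T = ((X ⊔ W : Submodule ℂ H) : Set H) := by
      ext h
      constructor
      · rintro ⟨⟨x, w⟩, rfl⟩
        rw [hT]
        exact Submodule.add_mem _ (Submodule.mem_sup_left x.2) (Submodule.mem_sup_right w.2)
      · intro hh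
        obtain ⟨y, hy, z, hz, rfl⟩ := Submodule.mem_sup.mp hh
        exact ⟨(⟨y, hy⟩, ⟨z, hz⟩), rfl⟩
    rw [← hTrange]
    exact hTanti.isClosed_range T.uniformContinuous
  -- quotient equivalence
  have hmod : (X ⊔ W) ⊓ Xᗮ = W := by
    rw [sup_comm, sup_inf_assoc_of_le _ hWX, hXW_bot, sup_bot_eq]
  let q : ↥Xᗮ →ₗ[ℂ] H ⧸ (X ⊔ W) := (X ⊔ W).mkQ ∘ₗ Xᗮ.subtype
  have hqsurj : Function.Surjective q := by
    intro z
    obtain ⟨h, rfl⟩ := (X ⊔ W).mkQ_surjective z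
    have hmem : h ∈ X ⊔ Xᗮ := by
      rw [Submodule.sup_orthogonal_of_hasOrthogonalProjection]; trivial
    obtain ⟨x, hx, y, hy, rfl⟩ := Submodule.mem_sup.mp hmem
    refine ⟨⟨y, hy⟩, ?_⟩
    have hx0 : (X ⊔ W).mkQ x = 0 :=
      (Submodule.Quotient.mk_eq_zero _).mpr (Submodule.mem_sup_left hx)
    show (X ⊔ W).mkQ y = (X ⊔ W).mkQ (x + y)
    rw [map_add, hx0, zero_add]
  have hker : LinearMap.ker q = W.comap Xᗮ.subtype := by
    ext y
    simp only [LinearMap.mem_ker, q, LinearMap.comp_apply, Submodule.mkQ_apply,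
      Submodule.Quotient.mk_eq_zero, Submodule.mem_comap, Submodule.subtype_apply]
    constructor
    · intro h
      have : (y : H) ∈ (X ⊔ W) ⊓ Xᗮ := ⟨h, y.2⟩
      rw [hmod] at this
      exact this
    · exact fun h => Submodule.mem_sup_right h
  let e : (↥Xᗮ ⧸ W.comap Xᗮ.subtype) ≃ₗ[ℂ] H ⧸ (X ⊔ W) :=
    (Submodule.quotEquivOfEq _ _ hker.symm).trans (q.quotKerEquivOfSurjective hqsurj)
  haveI hQfin : FiniteDimensional ℂ (H ⧸ (X ⊔ W)) := Module.Finite.equiv e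
  have hfr : finrank ℂ (H ⧸ (X ⊔ W)) = finrank ℂ (↥Xᗮ ⧸ W.comap Xᗮ.subtype) :=
    e.symm.finrank_eq
  -- closedness of B = F ⊔ range L
  have hBclosed : IsClosed ((F ⊔ LinearMap.range L : Submodule ℂ H) : Set H) := by
    haveI : CompleteSpace F := FiniteDimensional.complete ℂ F
    let S : (↥F × ↥W) →L[ℂ] H := F.subtypeL.coprod (W.subtypeL + X.subtypeL.comp ψ)
    have hS : ∀ p : ↥F × ↥W, S p = (p.1 : H) + ((p.2 : H) + (ψ p.2 : H)) := fun p => rfl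
    have hSanti : AntilipschitzWith (1 + ‖ψ‖₊) S := by
      apply AddMonoidHomClass.antilipschitz_of_bound
      rintro ⟨f, w⟩
      have h0 : inner (𝕜 := ℂ) ((f : H) + (ψ w : H)) (w : H) = 0 :=
        Submodule.inner_right_of_mem_orthogonal (X.add_mem (hFX f.2) (ψ w).2) (hWX w.2)
      obtain ⟨h1, h2⟩ := ortho_norm_le h0
      have hrw : (f : H) + (ψ w : H) + (w : H) = (f : H) + ((w : H) + (ψ w : H)) := by abel
      rw [hrw] at h1 h2
      have hψw : ‖(ψ w : H)‖ ≤ ‖ψ‖ * ‖w‖ := ψ.le_opNorm w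
      have hwn : ‖(w : H)‖ = ‖w‖ := rfl
      have hfbound : ‖(f : H)‖ ≤ (1 + ‖ψ‖) * ‖S (f, w)‖ := by
        have h3 : ‖(f : H)‖ ≤ ‖(f : H) + (ψ w : H)‖ + ‖(ψ w : H)‖ := by
          have h4 := norm_add_le ((f : H) + (ψ w : H)) (-(ψ w : H))
          simpa using h4
        rw [hS]
        have hψn : (0:ℝ) ≤ ‖ψ‖ := norm_nonneg ψ
        nlinarith [norm_nonneg ((f : H) + ((w : H) + (ψ w : H))), norm_nonneg (w : H)]
      have hwbound : ‖w‖ ≤ (1 + ‖ψ‖) * ‖S (f, w)‖ := by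
        rw [hS, ← hwn]
        nlinarith [norm_nonneg ((f : H) + ((w : H) + (ψ w : H))), norm_nonneg ψ]
      have hK : ((1 + ‖ψ‖₊ : NNReal) : ℝ) = 1 + ‖ψ‖ := by push_cast; ring
      rw [hK]
      simp only [Prod.norm_def]
      exact max_le hfbound hwbound
    have hSrange : Set.range S = ((F ⊔ LinearMap.range L : Submodule ℂ H) : Set H) := by
      ext h
      constructor
      · rintro ⟨⟨f, w⟩, rfl⟩
        rw [hS]
        exact Submodule.add_mem _ (Submodule.mem_sup_left f.2)
          (Submodule.mem_sup_right ⟨w, (hL w).symm⟩)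
      · intro hh
        obtain ⟨y, hy, z, hz, rfl⟩ := Submodule.mem_sup.mp hh
        obtain ⟨w, rfl⟩ := hz
        exact ⟨(⟨y, hy⟩, w), by rw [hS, hL]⟩
    rw [← hSrange]
    exact hSanti.isClosed_range S.uniformContinuous
  refine ⟨hBclosed, hinf, hsup, ⟨?_, ?_, ?_⟩, ?_⟩
  · rw [hinf]; exact hFfin
  · rw [hsup]; exact hXWclosed
  · rw [hsup]; exact hQfin
  · unfold fpIndex
    rw [hinf, hsup, hfr]

theorem stmt7 {H : Type*} [NormedAddCommGroup H] [InnerProductSpace ℂ H] [CompleteSpace H]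
    (X : Submodule ℂ H) (hXc : IsClosed (X : Set H))
    (F : Submodule ℂ H) (hFX : F ≤ X) (hFfin : FiniteDimensional ℂ F)
    (W : Submodule ℂ H) (hWX : W ≤ Xᗮ) (hWc : IsClosed (W : Set H))
    (hcofin : FiniteDimensional ℂ (↥Xᗮ ⧸ W.comap Xᗮ.subtype))
    (φ : ↥W →L[ℂ] ↥X)
    (G B : Submodule ℂ H)
    (hG : G = LinearMap.range (W.subtype + X.subtype ∘ₗ (φ : ↥W →ₗ[ℂ] ↥X)))
    (hB : B = F ⊔ G) :
    IsClosed (B : Set H) ∧ X ⊓ B = F ∧ X ⊔ B = X ⊔ W ∧ IsFredholmPair X B ∧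
    fpIndex X B = (finrank ℂ F : ℤ) - (finrank ℂ (↥Xᗮ ⧸ W.comap Xᗮ.subtype) : ℤ) ∧
    ∀ s : ℝ, 0 ≤ s → s ≤ 1 →
      IsFredholmPair X
        (F ⊔ LinearMap.range (W.subtype + X.subtype ∘ₗ
          (((s : ℂ) • φ : ↥W →L[ℂ] ↥X) : ↥W →ₗ[ℂ] ↥X))) ∧
      fpIndex X
        (F ⊔ LinearMap.range (W.subtype + X.subtype ∘ₗ
          (((s : ℂ) • φ : ↥W →L[ℂ] ↥X) : ↥W →ₗ[ℂ] ↥X)))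
        = (finrank ℂ F : ℤ) - (finrank ℂ (↥Xᗮ ⧸ W.comap Xᗮ.subtype) : ℤ) := by
  subst hG hB
  obtain ⟨h1, h2, h3, h4, h5⟩ := fredholm_key X hXc F hFX hFfin W hWX hWc hcofin φ
  refine ⟨h1, h2, h3, h4, h5, fun s _ _ => ?_⟩
  obtain ⟨_, _, _, c4, c5⟩ := fredholm_key X hXc F hFX hFfin W hWX hWc hcofin ((s : ℂ) • φ)
  exact ⟨c4, c5⟩
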